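/- Let C be a function from n×n real matrices to n×n real matrices such that for every symmetric positive-definite matrix B, C(B) is lower-triangular with strictly positive diagonal entries and C(B) C(B)ᵀ = B. Then for every symmetric positive-definite matrix A, setting L = C(A), the map C is Fréchet differentiable at A within the subspace of symmetric matrices: there exists a continuous linear map D on matrices such that C has Fréchet derivative D at A within the set of symmetric matrices, and for every symmetric matrix Δ, the matrix D(Δ) is lower-triangular and satisfies D(Δ) Lᵀ + L D(Δ)ᵀ = Δ. -/

import Mathlib

open Matrix

attribute [local instance] Matrix.normedAddCommGroup Matrix.normedSpace

section Aux
variable {n : ℕ}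

lemma lowtri_blockTri {L : Matrix (Fin n) (Fin n) ℝ} (h : ∀ i j, i < j → L i j = 0) :
    L.BlockTriangular OrderDual.toDual := fun _ _ hij => h _ _ hij

lemma lowtri_isUnitDet {L : Matrix (Fin n) (Fin n) ℝ} (h : ∀ i j, i < j → L i j = 0)
    (hd : ∀ i, 0 < L i i) : IsUnit L.det := by
  rw [Matrix.det_of_lowerTriangular L (lowtri_blockTri h)]
  exact (Finset.prod_pos fun i _ => hd i).ne'.isUnit

lemma lowtri_inv {L : Matrix (Fin n) (Fin n) ℝ} (h : ∀ i j, i < j → L i j = 0)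
    (hd : ∀ i, 0 < L i i) : ∀ i j, i < j → L⁻¹ i j = 0 := by
  haveI := L.invertibleOfIsUnitDet (lowtri_isUnitDet h hd)
  exact fun i j hij => blockTriangular_inv_of_blockTriangular (lowtri_blockTri h) hij

/-- Uniqueness of the Cholesky factor. -/
lemma cholesky_unique {L1 L2 : Matrix (Fin n) (Fin n) ℝ}
    (h1 : ∀ i j, i < j → L1 i j = 0) (h2 : ∀ i j, i < j → L2 i j = 0)
    (d1 : ∀ i, 0 < L1 i i) (d2 : ∀ i, 0 < L2 i i)
    (h : L1 * L1ᵀ = L2 * L2ᵀ) : L1 = L2 := by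
  haveI := L1.invertibleOfIsUnitDet (lowtri_isUnitDet h1 d1)
  haveI := L2.invertibleOfIsUnitDet (lowtri_isUnitDet h2 d2)
  set M := L2⁻¹ * L1 with hMdef
  have hL1 : L2 * M = L1 := by
    rw [hMdef, Matrix.mul_inv_cancel_left_of_invertible]
  have hMlow : ∀ i j, i < j → M i j = 0 := fun i j hij =>
    ((lowtri_blockTri (lowtri_inv h2 d2)).mul (lowtri_blockTri h1)) hij
  have hM2 : M = (L1⁻¹ * L2)ᵀ := by
    have e1 := congrArg (fun X : Matrix (Fin n) (Fin n) ℝ => ⅟L2 * X * ⅟(L1ᵀ)) h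
    simp only [Matrix.mul_assoc, mul_invOf_self, Matrix.mul_one, invOf_eq_nonsing_inv,
      Matrix.mul_inv_cancel_right_of_invertible] at e1
    rw [hMdef, transpose_mul, Matrix.transpose_nonsing_inv]
    simpa [Matrix.mul_assoc] using e1
  have hMdiag : ∀ i j, i ≠ j → M i j = 0 := by
    intro i j hij
    rcases lt_or_gt_of_ne hij with hlt | hgt
    · exact hMlow i j hlt
    · rw [hM2, transpose_apply]
      exact ((lowtri_blockTri (lowtri_inv h1 d1)).mul (lowtri_blockTri h2)) hgt
  have hMMt : M * Mᵀ = 1 := by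
    have e1 := congrArg (fun X : Matrix (Fin n) (Fin n) ℝ => ⅟L2 * X * ⅟(L2ᵀ)) h
    simp only [invOf_eq_nonsing_inv, Matrix.mul_assoc] at e1
    rw [hMdef, transpose_mul, Matrix.transpose_nonsing_inv]
    calc L2⁻¹ * L1 * (L1ᵀ * (L2ᵀ)⁻¹) = L2⁻¹ * (L1 * (L1ᵀ * (L2ᵀ)⁻¹)) := by
          rw [Matrix.mul_assoc]
      _ = L2⁻¹ * (L2 * (L2ᵀ * (L2ᵀ)⁻¹)) := e1
      _ = 1 := by simp [Matrix.mul_inv_of_invertible, Matrix.inv_mul_of_invertible]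
  have hMone : M = 1 := by
    ext i j
    rcases eq_or_ne i j with rfl | hij
    · have hsq : M i i * M i i = 1 := by
        have e2 := congrFun (congrFun hMMt i) i
        rw [Matrix.mul_apply] at e2
        rw [Finset.sum_eq_single i (fun k _ hk => by
          rw [transpose_apply, hMdiag i k (Ne.symm hk), mul_zero]) (by simp)] at e2
        simpa [transpose_apply] using e2
      have hpos : 0 < M i i := by
        have hd : L1 i i = L2 i i * M i i := by
          have e3 := congrFun (congrFun hL1.symm i) i
          rw [Matrix.mul_apply] at e3
          rwa [Finset.sum_eq_single i (fun k _ hk => by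
            rw [hMdiag k i hk, mul_zero]) (by simp)] at e3
        nlinarith [d1 i, d2 i]
      rcases mul_self_eq_one_iff.mp hsq with h' | h'
      · simp [h']
      · exfalso; rw [h'] at hpos; linarith
    · rw [hMdiag i j hij, Matrix.one_apply_ne hij]
  rw [← hL1, hMone, Matrix.mul_one]
end Aux

section Aux2
variable {n : ℕ}

/-- Injectivity of H ↦ H Lᵀ + L Hᵀ on lower triangular matrices. -/
lemma lyap_inj {L H : Matrix (Fin n) (Fin n) ℝ}
    (hL : ∀ i j, i < j → L i j = 0) (dL : ∀ i, 0 < L i i)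
    (hH : ∀ i j, i < j → H i j = 0)
    (heq : H * Lᵀ + L * Hᵀ = 0) : H = 0 := by
  haveI := L.invertibleOfIsUnitDet (lowtri_isUnitDet hL dL)
  set K := L⁻¹ * H with hKdef
  have hKlow : ∀ i j, i < j → K i j = 0 := fun i j hij =>
    ((lowtri_blockTri (lowtri_inv hL dL)).mul (lowtri_blockTri hH)) hij
  have hsum : K + Kᵀ = 0 := by
    have e1 := congrArg (fun X : Matrix (Fin n) (Fin n) ℝ => L⁻¹ * X * (Lᵀ)⁻¹) heq
    simp only [Matrix.add_mul, Matrix.mul_add, Matrix.mul_zero, Matrix.zero_mul] at e1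
    rw [← Matrix.mul_assoc (L⁻¹) H (Lᵀ), Matrix.mul_assoc (L⁻¹ * H) (Lᵀ) ((Lᵀ)⁻¹),
      Matrix.mul_inv_of_invertible, Matrix.mul_one, ← Matrix.mul_assoc (L⁻¹) L (Hᵀ),
      Matrix.inv_mul_of_invertible, Matrix.one_mul] at e1
    have : Hᵀ * (Lᵀ)⁻¹ = Kᵀ := by
      rw [hKdef, transpose_mul, Matrix.transpose_nonsing_inv]
    rwa [this] at e1
  have hK0 : K = 0 := by
    ext i j
    have hs : ∀ a b, K a b + K b a = 0 := fun a b => by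
      have := congrFun (congrFun hsum a) b
      simpa [transpose_apply] using this
    rcases lt_trichotomy i j with hlt | rfl | hgt
    · simp [hKlow i j hlt]
    · have := hs i i; simp only [Matrix.zero_apply]; linarith
    · have := hs i j
      rw [hKlow j i hgt] at this
      simpa using this
  have : H = L * K := by rw [hKdef, Matrix.mul_inv_cancel_left_of_invertible]
  rw [this, hK0, Matrix.mul_zero]
end Aux2

section Aux3
variable (n : ℕ)

/-- The submodule of lower-triangular matrices. -/
def lowerT : Submodule ℝ (Matrix (Fin n) (Fin n) ℝ) where
  carrier := {L | ∀ i j, i < j → L i j = 0}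
  add_mem' := fun {a b} ha hb i j hij => by
    simp [Matrix.add_apply, ha i j hij, hb i j hij]
  zero_mem' := fun i j hij => rfl
  smul_mem' := fun c {L} hL i j hij => by simp [hL i j hij]

/-- The submodule of symmetric matrices. -/
def symS : Submodule ℝ (Matrix (Fin n) (Fin n) ℝ) where
  carrier := {B | Bᵀ = B}
  add_mem' := fun {a b} ha hb => by
    have ha' : aᵀ = a := ha
    have hb' : bᵀ = b := hb
    show (a + b)ᵀ = a + b
    rw [transpose_add, ha', hb']
  zero_mem' := transpose_zero
  smul_mem' := fun c {B} hB => by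
    have hB' : Bᵀ = B := hB
    show (c • B)ᵀ = c • B
    rw [transpose_smul, hB']

variable {n}

/-- `L ↦ L + Lᵀ` as a linear map from lower triangular to symmetric matrices. -/
noncomputable def lowToSym : lowerT n →ₗ[ℝ] symS n where
  toFun L := ⟨L.1 + L.1ᵀ, by simp [symS, transpose_add, add_comm]⟩
  map_add' a b := by
    apply Subtype.ext
    simp only [Submodule.coe_add, transpose_add]
    abel
  map_smul' c a := by
    apply Subtype.ext
    simp [transpose_smul, smul_add]

lemma lowToSym_bijective : Function.Bijective (lowToSym (n := n)) := by
  constructor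
  · rw [injective_iff_map_eq_zero]
    intro L hL
    have h0 : L.1 + L.1ᵀ = 0 := congrArg Subtype.val hL
    apply Subtype.ext
    ext i j
    have he : L.1 i j + L.1 j i = 0 := by
      have := congrFun (congrFun h0 i) j
      simpa [transpose_apply] using this
    rcases lt_trichotomy i j with hlt | rfl | hgt
    · rw [L.2 i j hlt]; rfl
    · have h2 : (L : Matrix (Fin n) (Fin n) ℝ) i i = 0 := by linarith
      rw [h2]; rfl
    · rw [L.2 j i hgt] at he
      rw [show (L : Matrix (Fin n) (Fin n) ℝ) i j = 0 by linarith]; rfl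
  · rintro ⟨B, hB⟩
    have hBsym : ∀ a b, B b a = B a b := fun a b => by
      have := congrFun (congrFun hB a) b
      simpa [transpose_apply] using this
    refine ⟨⟨fun i j => if i < j then 0 else if i = j then B i j / 2 else B i j,
      fun i j hij => by simp [hij]⟩, ?_⟩
    apply Subtype.ext
    ext i j
    show (fun i j => if i < j then 0 else if i = j then B i j / 2 else B i j) i j
      + (fun i j => if i < j then 0 else if i = j then B i j / 2 else B i j) j i = B i j
    rcases lt_trichotomy i j with hlt | rfl | hgt
    · simp [hlt, not_lt_of_gt hlt, hlt.ne', hBsym i j]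
    · simp
    · simp [hgt, not_lt_of_gt hgt, hgt.ne']

/-- Symmetrization as a continuous linear map into the symmetric submodule. -/
noncomputable def pSym (n : ℕ) : Matrix (Fin n) (Fin n) ℝ →L[ℝ] symS n :=
  LinearMap.toContinuousLinearMap
  { toFun := fun B => ⟨(2⁻¹ : ℝ) • (B + Bᵀ), by
      show ((2⁻¹ : ℝ) • (B + Bᵀ))ᵀ = (2⁻¹ : ℝ) • (B + Bᵀ)
      rw [transpose_smul, transpose_add, transpose_transpose, add_comm]⟩
    map_add' := fun a b => Subtype.ext (by
      simp only [transpose_add, Submodule.coe_add, smul_add]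
      module)
    map_smul' := fun c a => Subtype.ext (by
      simp only [transpose_smul, RingHom.id_apply, SetLike.val_smul, smul_add]
      module) }

lemma pSym_apply_symm {n : ℕ} {B : Matrix (Fin n) (Fin n) ℝ} (hB : Bᵀ = B) :
    ((pSym n B : symS n) : Matrix (Fin n) (Fin n) ℝ) = B := by
  show (2⁻¹ : ℝ) • (B + Bᵀ) = B
  rw [hB, ← two_smul ℝ B, smul_smul]
  norm_num

/-- `H ↦ H Lᵀ + L Hᵀ` from lower triangular to symmetric matrices. -/
noncomputable def dSL {n : ℕ} (L : Matrix (Fin n) (Fin n) ℝ) : lowerT n →L[ℝ] symS n :=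
  LinearMap.toContinuousLinearMap
  { toFun := fun H => ⟨H.1 * Lᵀ + L * H.1ᵀ, by
      show (H.1 * Lᵀ + L * H.1ᵀ)ᵀ = _
      rw [transpose_add, transpose_mul, transpose_mul, transpose_transpose,
        transpose_transpose, add_comm]⟩
    map_add' := fun a b => Subtype.ext (by
      simp only [Submodule.coe_add, transpose_add, Matrix.add_mul, Matrix.mul_add]
      abel)
    map_smul' := fun c a => Subtype.ext (by
      simp only [SetLike.val_smul, RingHom.id_apply, transpose_smul, Matrix.smul_mul,
        Matrix.mul_smul, smul_add]) }

lemma dSL_inj {n : ℕ} {L : Matrix (Fin n) (Fin n) ℝ}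
    (hL : ∀ i j, i < j → L i j = 0) (dL : ∀ i, 0 < L i i) :
    Function.Injective (dSL (n := n) L) := by
  rw [injective_iff_map_eq_zero]
  intro H hH
  have h0 : H.1 * Lᵀ + L * H.1ᵀ = 0 := congrArg Subtype.val hH
  exact Subtype.ext (lyap_inj hL dL H.2 h0)

/-- The derivative of the symmetrized square map, as a continuous linear equivalence. -/
noncomputable def dSequiv {n : ℕ} (L : Matrix (Fin n) (Fin n) ℝ)
    (hL : ∀ i j, i < j → L i j = 0) (dL : ∀ i, 0 < L i i) : lowerT n ≃L[ℝ] symS n :=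
  LinearEquiv.toContinuousLinearEquiv
    (LinearEquiv.ofBijective ((dSL L).toLinearMap)
      ⟨dSL_inj hL dL,
        (LinearMap.injective_iff_surjective_of_finrank_eq_finrank
          (LinearEquiv.finrank_eq (LinearEquiv.ofBijective lowToSym lowToSym_bijective))).mp
          (dSL_inj hL dL)⟩)

lemma dSequiv_coe {n : ℕ} (L : Matrix (Fin n) (Fin n) ℝ)
    (hL : ∀ i j, i < j → L i j = 0) (dL : ∀ i, 0 < L i i) :
    ((dSequiv L hL dL : lowerT n ≃L[ℝ] symS n) : lowerT n →L[ℝ] symS n) = dSL L := by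
  apply ContinuousLinearMap.ext
  intro H
  rfl
end Aux3

section Aux4
variable (n : ℕ)

/-- `(X, Y) ↦ X * Yᵀ` as a continuous bilinear map. -/
noncomputable def mulT : Matrix (Fin n) (Fin n) ℝ →L[ℝ]
    Matrix (Fin n) (Fin n) ℝ →L[ℝ] Matrix (Fin n) (Fin n) ℝ :=
  LinearMap.toContinuousLinearMap
  { toFun := fun X => LinearMap.toContinuousLinearMap
      { toFun := fun Y => X * Yᵀ
        map_add' := fun Y Z => by
          show X * (Y + Z)ᵀ = X * Yᵀ + X * Zᵀ
          rw [transpose_add, Matrix.mul_add]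
        map_smul' := fun c Y => by
          show X * (c • Y)ᵀ = c • (X * Yᵀ)
          rw [transpose_smul, Matrix.mul_smul] }
    map_add' := fun X Z => by
      apply ContinuousLinearMap.ext; intro Y
      show (X + Z) * Yᵀ = X * Yᵀ + Z * Yᵀ
      rw [Matrix.add_mul]
    map_smul' := fun c X => by
      apply ContinuousLinearMap.ext; intro Y
      show (c • X) * Yᵀ = c • (X * Yᵀ)
      rw [Matrix.smul_mul] }

variable {n}

lemma sq_hasStrictFDerivAt (X : Matrix (Fin n) (Fin n) ℝ) :
    HasStrictFDerivAt (fun B : Matrix (Fin n) (Fin n) ℝ => B * Bᵀ)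
      (((mulT n).isBoundedBilinearMap.deriv (X, X)).comp
        ((ContinuousLinearMap.id ℝ _).prod (ContinuousLinearMap.id ℝ _))) X := by
  have h1 : HasStrictFDerivAt (fun B : Matrix (Fin n) (Fin n) ℝ => (B, B))
      ((ContinuousLinearMap.id ℝ _).prod (ContinuousLinearMap.id ℝ _)) X :=
    HasStrictFDerivAt.prodMk (hasStrictFDerivAt_id X) (hasStrictFDerivAt_id X)
  exact HasStrictFDerivAt.comp (g := fun p : Matrix (Fin n) (Fin n) ℝ × Matrix (Fin n) (Fin n) ℝ => mulT n p.1 p.2)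
    (f := fun B : Matrix (Fin n) (Fin n) ℝ => (B, B)) X
    ((mulT n).isBoundedBilinearMap.hasStrictFDerivAt (X, X)) h1

lemma sq_deriv_apply (X H : Matrix (Fin n) (Fin n) ℝ) :
    (((mulT n).isBoundedBilinearMap.deriv (X, X)).comp
        ((ContinuousLinearMap.id ℝ _).prod (ContinuousLinearMap.id ℝ _))) H
      = X * Hᵀ + H * Xᵀ := by
  rw [ContinuousLinearMap.comp_apply]
  have : ((ContinuousLinearMap.id ℝ _).prod (ContinuousLinearMap.id ℝ _)) H = (H, H) := rfl
  erw [this, (mulT n).isBoundedBilinearMap.deriv_apply]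
  rfl
end Aux4

section Aux5

lemma quad_continuous {n : ℕ} (Mm : Matrix (Fin n) (Fin n) ℝ) :
    Continuous fun x : Fin n → ℝ => x ⬝ᵥ Mm.mulVec x := by
  have : (fun x : Fin n → ℝ => x ⬝ᵥ Mm.mulVec x)
      = fun x => ∑ i, x i * ∑ j, Mm i j * x j := by
    funext x
    simp [dotProduct, Matrix.mulVec]
  rw [this]
  exact continuous_finset_sum _ fun i _ => (continuous_apply i).mul
    (continuous_finset_sum _ fun j _ => continuous_const.mul (continuous_apply j))

lemma quad_bound {n : ℕ} (Mm : Matrix (Fin n) (Fin n) ℝ) (u : Fin n → ℝ) (hu : ‖u‖ = 1) :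
    |u ⬝ᵥ Mm.mulVec u| ≤ (n : ℝ)^2 * ‖Mm‖ := by
  have habs : ∀ i : Fin n, |u i| ≤ 1 := fun i => by
    have := norm_le_pi_norm u i
    rwa [hu, Real.norm_eq_abs] at this
  have hent : ∀ i j, |Mm i j| ≤ ‖Mm‖ := fun i j => by
    have := Mm.norm_entry_le_entrywise_sup_norm (i := i) (j := j)
    rwa [Real.norm_eq_abs] at this
  have hMnn : 0 ≤ ‖Mm‖ := norm_nonneg _
  calc |u ⬝ᵥ Mm.mulVec u| = |∑ i, u i * ∑ j, Mm i j * u j| := by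
        simp [dotProduct, Matrix.mulVec]
    _ ≤ ∑ i, |u i * ∑ j, Mm i j * u j| := Finset.abs_sum_le_sum_abs _ _
    _ ≤ ∑ _i : Fin n, (n : ℝ) * ‖Mm‖ := by
        apply Finset.sum_le_sum
        intro i _
        rw [abs_mul]
        calc |u i| * |∑ j, Mm i j * u j| ≤ 1 * ∑ j, |Mm i j * u j| :=
              mul_le_mul (habs i) (Finset.abs_sum_le_sum_abs _ _) (abs_nonneg _) zero_le_one
          _ = ∑ j, |Mm i j * u j| := one_mul _
          _ ≤ ∑ _j : Fin n, ‖Mm‖ := by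
              apply Finset.sum_le_sum
              intro j _
              rw [abs_mul]
              calc |Mm i j| * |u j| ≤ ‖Mm‖ * 1 :=
                    mul_le_mul (hent i j) (habs j) (abs_nonneg _) hMnn
                _ = ‖Mm‖ := mul_one _
          _ = (n : ℝ) * ‖Mm‖ := by simp [Finset.sum_const, Finset.card_univ]
    _ = (n : ℝ)^2 * ‖Mm‖ := by
        rw [Finset.sum_const, Finset.card_univ]
        simp [pow_two]; ring

lemma eventually_posDef {n : ℕ} (hn : 0 < n) (A : Matrix (Fin n) (Fin n) ℝ)
    (hA : ∀ x : Fin n → ℝ, x ≠ 0 → 0 < x ⬝ᵥ A.mulVec x) :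
    ∀ᶠ B in nhds A, ∀ x : Fin n → ℝ, x ≠ 0 → 0 < x ⬝ᵥ B.mulVec x := by
  haveI : Nonempty (Fin n) := ⟨⟨0, hn⟩⟩
  haveI : Nontrivial (Fin n → ℝ) := by infer_instance
  have hne : (Metric.sphere (0 : Fin n → ℝ) 1).Nonempty :=
    NormedSpace.sphere_nonempty.mpr zero_le_one
  obtain ⟨u0, hu0mem, hmin'⟩ := (isCompact_sphere (0 : Fin n → ℝ) 1).exists_isMinOn hne
    (quad_continuous A).continuousOn
  have hu0norm : ‖u0‖ = 1 := by rwa [mem_sphere_zero_iff_norm] at hu0mem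
  set m := u0 ⬝ᵥ A.mulVec u0 with hm
  have hmpos : 0 < m := hA u0 (fun h => by rw [h] at hu0norm; simp at hu0norm)
  apply Metric.eventually_nhds_iff.mpr
  refine ⟨m / (2 * ((n : ℝ)^2 + 1)), by positivity, ?_⟩
  intro B hB x hx
  set u : Fin n → ℝ := ‖x‖⁻¹ • x with hu
  have hxn : (0 : ℝ) < ‖x‖ := norm_pos_iff.mpr hx
  have hunorm : ‖u‖ = 1 := by
    rw [hu, norm_smul, norm_inv, norm_norm, inv_mul_cancel₀ hxn.ne']
  have humem : u ∈ Metric.sphere (0 : Fin n → ℝ) 1 := by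
    rwa [mem_sphere_zero_iff_norm]
  -- positivity for the unit vector u
  have hdiff : u ⬝ᵥ (B - A).mulVec u = u ⬝ᵥ B.mulVec u - u ⬝ᵥ A.mulVec u := by
    rw [Matrix.sub_mulVec, dotProduct_sub]
  have hbd : |u ⬝ᵥ (B - A).mulVec u| ≤ (n : ℝ)^2 * ‖B - A‖ := quad_bound _ u hunorm
  have hdist : ‖B - A‖ < m / (2 * ((n : ℝ)^2 + 1)) := by
    rwa [dist_eq_norm] at hB
  have hAu : m ≤ u ⬝ᵥ A.mulVec u := hmin' humem
  have hupos : 0 < u ⬝ᵥ B.mulVec u := by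
    have h1 : (n : ℝ)^2 * ‖B - A‖ ≤ ((n : ℝ)^2 + 1) * ‖B - A‖ := by
      nlinarith [norm_nonneg (B - A)]
    have h2 : ((n : ℝ)^2 + 1) * ‖B - A‖ < m / 2 := by
      have hc : (0 : ℝ) < (n : ℝ)^2 + 1 := by positivity
      rw [div_mul_eq_div_div] at hdist
      calc ((n : ℝ)^2 + 1) * ‖B - A‖ < ((n : ℝ)^2 + 1) * (m / 2 / ((n : ℝ)^2 + 1)) := by
            exact (mul_lt_mul_iff_right₀ hc).mpr hdist
        _ = m / 2 := by field_simp
    have habs := abs_le.mp hbd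
    linarith [habs.1]
  -- transfer to x
  have hscale : u ⬝ᵥ B.mulVec u = ‖x‖⁻¹ * (‖x‖⁻¹ * (x ⬝ᵥ B.mulVec x)) := by
    rw [hu, smul_dotProduct, Matrix.mulVec_smul, dotProduct_smul]
    simp [smul_eq_mul]
  rw [hscale] at hupos
  have := mul_pos (mul_pos hxn hxn) hupos
  calc (0:ℝ) < ‖x‖ * ‖x‖ * (‖x‖⁻¹ * (‖x‖⁻¹ * (x ⬝ᵥ B.mulVec x))) := this
    _ = x ⬝ᵥ B.mulVec x := by field_simp
end Aux5

/-- The Cholesky factorization map `C` is Fréchet differentiable, within the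
subspace of symmetric matrices, at every symmetric positive-definite matrix
`A`; its derivative `D` sends each symmetric `Δ` to the unique lower-triangular
solution of `D(Δ) * Lᵀ + L * D(Δ)ᵀ = Δ`, where `L = C(A)`. -/
theorem cholesky_hasFDerivWithinAt (n : ℕ)
    (C : Matrix (Fin n) (Fin n) ℝ → Matrix (Fin n) (Fin n) ℝ)
    (hC : ∀ B : Matrix (Fin n) (Fin n) ℝ, Bᵀ = B →
      (∀ x : Fin n → ℝ, x ≠ 0 → 0 < x ⬝ᵥ B.mulVec x) →
      (∀ i j, i < j → C B i j = 0) ∧ (∀ i, 0 < C B i i) ∧ C B * (C B)ᵀ = B)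
    (A : Matrix (Fin n) (Fin n) ℝ) (hAsym : Aᵀ = A)
    (hApd : ∀ x : Fin n → ℝ, x ≠ 0 → 0 < x ⬝ᵥ A.mulVec x) :
    ∃ D : Matrix (Fin n) (Fin n) ℝ →L[ℝ] Matrix (Fin n) (Fin n) ℝ,
      HasFDerivWithinAt C D {B : Matrix (Fin n) (Fin n) ℝ | Bᵀ = B} A ∧
      ∀ Δ : Matrix (Fin n) (Fin n) ℝ, Δᵀ = Δ →
        (∀ i j, i < j → D Δ i j = 0) ∧
        D Δ * (C A)ᵀ + C A * (D Δ)ᵀ = Δ := by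
  obtain ⟨hClow, hCdiag, hCeq⟩ := hC A hAsym hApd
  rcases Nat.eq_zero_or_pos n with hn | hn
  · -- trivial case `n = 0`
    subst hn
    refine ⟨0, ?_, fun Δ hΔ => ⟨fun i j _ => i.elim0, Subsingleton.elim _ _⟩⟩
    have hconst : C = fun _ => C A := funext fun B => Subsingleton.elim _ _
    rw [hconst]
    exact hasFDerivWithinAt_const (C A) A _
  · -- main case
    set L0 : lowerT n := ⟨C A, hClow⟩ with hL0def
    set Sh : lowerT n → symS n :=
      fun L => pSym n ((L : Matrix (Fin n) (Fin n) ℝ) * (L : Matrix (Fin n) (Fin n) ℝ)ᵀ)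
      with hShdef
    have hShval : ∀ L : lowerT n, ((Sh L : symS n) : Matrix (Fin n) (Fin n) ℝ)
        = (L : Matrix (Fin n) (Fin n) ℝ) * (L : Matrix (Fin n) (Fin n) ℝ)ᵀ := fun L =>
      pSym_apply_symm (by rw [transpose_mul, transpose_transpose])
    -- strict differentiability of Sh at L0
    have h1 : HasStrictFDerivAt
        (fun L : lowerT n => ((L : Matrix (Fin n) (Fin n) ℝ)))
        ((lowerT n).subtypeL) L0 := ((lowerT n).subtypeL).hasStrictFDerivAt
    have h2 := (sq_hasStrictFDerivAt (n := n) (C A)).comp L0 h1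
    have h3 := ((pSym n).hasStrictFDerivAt).comp L0 h2
    have hD'eq : (pSym n).comp (((((mulT n).isBoundedBilinearMap.deriv (C A, C A)).comp
          ((ContinuousLinearMap.id ℝ _).prod (ContinuousLinearMap.id ℝ _)))).comp
          (lowerT n).subtypeL) = dSL (C A) := by
      apply ContinuousLinearMap.ext; intro H
      apply Subtype.ext
      erw [ContinuousLinearMap.comp_apply, ContinuousLinearMap.comp_apply]
      erw [show ((lowerT n).subtypeL H) = (H : Matrix (Fin n) (Fin n) ℝ) from rfl]
      erw [sq_deriv_apply]
      rw [pSym_apply_symm (by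
        rw [transpose_add, transpose_mul, transpose_mul, transpose_transpose,
          transpose_transpose, add_comm])]
      exact add_comm _ _
    set eDS := dSequiv (C A) hClow hCdiag with heDSdef
    have hSstrict : HasStrictFDerivAt Sh (eDS : lowerT n →L[ℝ] symS n) L0 := by
      rw [heDSdef, dSequiv_coe, ← hD'eq]
      exact h3
    set g := hSstrict.localInverse Sh _ L0 with hgdef
    have hgderiv : HasStrictFDerivAt g (eDS.symm : symS n →L[ℝ] lowerT n) (Sh L0) :=
      hSstrict.to_localInverse
    have hgL0 : g (Sh L0) = L0 := hSstrict.localInverse_apply_image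
    have hgr : ∀ᶠ y in nhds (Sh L0), Sh (g y) = y := hSstrict.eventually_right_inverse
    have hShL0 : Sh L0 = pSym n A := by
      apply Subtype.ext
      rw [hShval]
      show (C A) * (C A)ᵀ = _
      rw [hCeq, pSym_apply_symm hAsym]
    set D : Matrix (Fin n) (Fin n) ℝ →L[ℝ] Matrix (Fin n) (Fin n) ℝ :=
      ((lowerT n).subtypeL).comp ((eDS.symm : symS n →L[ℝ] lowerT n).comp (pSym n)) with hDdef
    set F : Matrix (Fin n) (Fin n) ℝ → Matrix (Fin n) (Fin n) ℝ :=
      fun B => ((g (pSym n B) : lowerT n) : Matrix (Fin n) (Fin n) ℝ) with hFdef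
    have hgderiv' : HasFDerivAt g (eDS.symm : symS n →L[ℝ] lowerT n) (pSym n A) := by
      rw [← hShL0]; exact hgderiv.hasFDerivAt
    have hFderiv : HasFDerivAt F D A :=
      ((lowerT n).subtypeL.hasFDerivAt).comp A
        (hgderiv'.comp A ((pSym n).hasFDerivAt))
    -- the three eventual properties
    have ev1 := eventually_posDef hn A hApd
    have ev2 : ∀ᶠ B in nhds A, Sh (g (pSym n B)) = pSym n B := by
      have := ((pSym n).continuous.tendsto A).eventually (hShL0 ▸ hgr)
      exact this
    have ev3 : ∀ᶠ B in nhds A, ∀ i, 0 < F B i i := by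
      have hopen : IsOpen {X : Matrix (Fin n) (Fin n) ℝ | ∀ i, 0 < X i i} := by
        have : {X : Matrix (Fin n) (Fin n) ℝ | ∀ i, 0 < X i i}
            = ⋂ i, {X : Matrix (Fin n) (Fin n) ℝ | 0 < X i i} := by
          ext X; simp
        rw [this]
        exact isOpen_iInter_of_finite fun i =>
          isOpen_lt continuous_const ((continuous_apply i).comp (continuous_apply i))
      have hFA : F A = C A := by
        rw [hFdef]
        show ((g (pSym n A) : lowerT n) : Matrix (Fin n) (Fin n) ℝ) = C A
        rw [← hShL0, hgL0]
      have hmem : {X : Matrix (Fin n) (Fin n) ℝ | ∀ i, 0 < X i i} ∈ nhds (F A) :=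
        hopen.mem_nhds (by rw [hFA]; exact hCdiag)
      exact hFderiv.continuousAt.eventually_mem hmem
    have key : ∀ᶠ B in nhds A, Bᵀ = B → C B = F B := by
      filter_upwards [ev1, ev2, ev3] with B h1' h2' h3' hBsym
      obtain ⟨bl, bd, be⟩ := hC B hBsym h1'
      have hlow : ∀ i j, i < j → F B i j = 0 := (g (pSym n B)).2
      have heq : F B * (F B)ᵀ = B := by
        have h2v := congrArg Subtype.val h2'
        rw [hShval, pSym_apply_symm hBsym] at h2v
        exact h2v
      exact cholesky_unique bl hlow bd h3' (be.trans heq.symm)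
    refine ⟨D, ?_, ?_⟩
    · have hCA : C A = F A := key.self_of_nhds hAsym
      have hev : C =ᶠ[nhdsWithin A {B : Matrix (Fin n) (Fin n) ℝ | Bᵀ = B}] F := by
        filter_upwards [key.filter_mono nhdsWithin_le_nhds,
          eventually_mem_nhdsWithin] with B hk hB
        exact hk hB
      exact (hFderiv.hasFDerivWithinAt).congr_of_eventuallyEq hev hCA
    · intro Δ hΔ
      have hDΔ : D Δ = ((eDS.symm (pSym n Δ) : lowerT n) : Matrix (Fin n) (Fin n) ℝ) := rfl
      constructor
      · intro i j hij
        rw [hDΔ]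
        exact (eDS.symm (pSym n Δ)).2 i j hij
      · have happ := eDS.apply_symm_apply (pSym n Δ)
        have hval := congrArg Subtype.val happ
        have hcoe : (eDS (eDS.symm (pSym n Δ)) : symS n)
            = dSL (C A) (eDS.symm (pSym n Δ)) := by
          rw [← dSequiv_coe (C A) hClow hCdiag]
          rfl
        rw [hcoe] at hval
        have hval2 : ((eDS.symm (pSym n Δ) : lowerT n) : Matrix (Fin n) (Fin n) ℝ) * (C A)ᵀ
            + C A * ((eDS.symm (pSym n Δ) : lowerT n) : Matrix (Fin n) (Fin n) ℝ)ᵀ = Δ := by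
          have := hval
          rw [pSym_apply_symm hΔ] at this
          exact this
        rw [hDΔ]
        exact hval2
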